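/- arXiv:2401.17540 — 8 statements merged into one kernel-verified Lean document; each statement's English description precedes it below -/
import Mathlib

section
/- With the SVD block notation (Γ = VᵀHU with blocks X = D^{-1}, Y, Z, W), assuming H satisfies AHA = A: H satisfies (AH)ᵀ = AH if and only if Y = 0; H satisfies (HA)ᵀ = HA if and only if Z = 0; and H satisfies HAH = H if and only if W = ZDY. -/
open Matrix

/-- SVD block characterization of properties (P2), (P3), (P4), assuming (P1) holds
(so that the top-left block of `Γ = Vᵀ * H * U` is `D⁻¹`). -/
theorem P234_block_characterization (r p q : ℕ)
    (U : Matrix (Fin r ⊕ Fin p) (Fin r ⊕ Fin p) ℝ)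
    (V : Matrix (Fin r ⊕ Fin q) (Fin r ⊕ Fin q) ℝ)
    (hU : Uᵀ * U = 1) (hV : Vᵀ * V = 1)
    (d : Fin r → ℝ) (hd : ∀ i, 0 < d i)
    (A : Matrix (Fin r ⊕ Fin p) (Fin r ⊕ Fin q) ℝ)
    (hA : A = U * (Matrix.fromBlocks (Matrix.diagonal d) 0 0 0 :
        Matrix (Fin r ⊕ Fin p) (Fin r ⊕ Fin q) ℝ) * Vᵀ)
    (H : Matrix (Fin r ⊕ Fin q) (Fin r ⊕ Fin p) ℝ)
    (Y : Matrix (Fin r) (Fin p) ℝ)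
    (Z : Matrix (Fin q) (Fin r) ℝ) (W : Matrix (Fin q) (Fin p) ℝ)
    (hΓ : Vᵀ * H * U = Matrix.fromBlocks (Matrix.diagonal d)⁻¹ Y Z W)
    (h1 : A * H * A = A) :
    ((A * H)ᵀ = A * H ↔ Y = 0) ∧
    ((H * A)ᵀ = H * A ↔ Z = 0) ∧
    (H * A * H = H ↔ W = Z * Matrix.diagonal d * Y) := by
  set D : Matrix (Fin r) (Fin r) ℝ := Matrix.diagonal d with hD
  have hdne : ∀ i, d i ≠ 0 := fun i => ne_of_gt (hd i)
  have hdet : IsUnit D.det := by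
    rw [hD, Matrix.det_diagonal]
    exact isUnit_iff_ne_zero.mpr (Finset.prod_ne_zero_iff.mpr fun i _ => hdne i)
  have hDinv : D * D⁻¹ = 1 := Matrix.mul_nonsing_inv D hdet
  have hDinv' : D⁻¹ * D = 1 := Matrix.nonsing_inv_mul D hdet
  have hUU : U * Uᵀ = 1 := mul_eq_one_comm.mp hU
  have hVV : V * Vᵀ = 1 := mul_eq_one_comm.mp hV
  set Γ : Matrix (Fin r ⊕ Fin q) (Fin r ⊕ Fin p) ℝ := Matrix.fromBlocks D⁻¹ Y Z W with hΓdef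
  set S : Matrix (Fin r ⊕ Fin p) (Fin r ⊕ Fin q) ℝ := Matrix.fromBlocks D 0 0 0 with hSdef
  have hH : H = V * Γ * Uᵀ := by
    calc H = (V * Vᵀ) * H * (U * Uᵀ) := by rw [hVV, hUU, Matrix.one_mul, Matrix.mul_one]
    _ = V * (Vᵀ * H * U) * Uᵀ := by simp only [Matrix.mul_assoc]
    _ = V * Γ * Uᵀ := by rw [hΓ]
  -- cancellation lemmas
  have cancelU : ∀ M N : Matrix (Fin r ⊕ Fin p) (Fin r ⊕ Fin p) ℝ,
      U * M * Uᵀ = U * N * Uᵀ → M = N := by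
    intro M N h
    calc M = (Uᵀ * U) * M * (Uᵀ * U) := by rw [hU, Matrix.one_mul, Matrix.mul_one]
    _ = Uᵀ * (U * M * Uᵀ) * U := by simp only [Matrix.mul_assoc]
    _ = Uᵀ * (U * N * Uᵀ) * U := by rw [h]
    _ = (Uᵀ * U) * N * (Uᵀ * U) := by simp only [Matrix.mul_assoc]
    _ = N := by rw [hU, Matrix.one_mul, Matrix.mul_one]
  have cancelV : ∀ M N : Matrix (Fin r ⊕ Fin q) (Fin r ⊕ Fin q) ℝ,
      V * M * Vᵀ = V * N * Vᵀ → M = N := by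
    intro M N h
    calc M = (Vᵀ * V) * M * (Vᵀ * V) := by rw [hV, Matrix.one_mul, Matrix.mul_one]
    _ = Vᵀ * (V * M * Vᵀ) * V := by simp only [Matrix.mul_assoc]
    _ = Vᵀ * (V * N * Vᵀ) * V := by rw [h]
    _ = (Vᵀ * V) * N * (Vᵀ * V) := by simp only [Matrix.mul_assoc]
    _ = N := by rw [hV, Matrix.one_mul, Matrix.mul_one]
  have cancelVU : ∀ M N : Matrix (Fin r ⊕ Fin q) (Fin r ⊕ Fin p) ℝ,
      V * M * Uᵀ = V * N * Uᵀ → M = N := by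
    intro M N h
    calc M = (Vᵀ * V) * M * (Uᵀ * U) := by rw [hV, hU, Matrix.one_mul, Matrix.mul_one]
    _ = Vᵀ * (V * M * Uᵀ) * U := by simp only [Matrix.mul_assoc]
    _ = Vᵀ * (V * N * Uᵀ) * U := by rw [h]
    _ = (Vᵀ * V) * N * (Uᵀ * U) := by simp only [Matrix.mul_assoc]
    _ = N := by rw [hV, hU, Matrix.one_mul, Matrix.mul_one]
  have hAH : A * H = U * (S * Γ) * Uᵀ := by
    rw [hA, hH]
    simp only [Matrix.mul_assoc]
    rw [show Vᵀ * (V * (Γ * Uᵀ)) = (Vᵀ * V) * (Γ * Uᵀ) by simp [Matrix.mul_assoc], hV, Matrix.one_mul]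
  have hHA : H * A = V * (Γ * S) * Vᵀ := by
    rw [hA, hH]
    simp only [Matrix.mul_assoc]
    rw [show Uᵀ * (U * (S * Vᵀ)) = (Uᵀ * U) * (S * Vᵀ) by simp [Matrix.mul_assoc], hU, Matrix.one_mul]
  have hSΓ : S * Γ = Matrix.fromBlocks 1 (D * Y) 0 0 := by
    rw [hSdef, hΓdef, Matrix.fromBlocks_multiply]
    simp [hDinv]
  have hΓS : Γ * S = Matrix.fromBlocks 1 0 (Z * D) 0 := by
    rw [hSdef, hΓdef, Matrix.fromBlocks_multiply]
    simp [hDinv']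
  refine ⟨?_, ?_, ?_⟩
  · constructor
    · intro h
      rw [hAH] at h
      have h' : (S * Γ)ᵀ = S * Γ := by
        apply cancelU
        calc U * (S * Γ)ᵀ * Uᵀ = (U * (S * Γ) * Uᵀ)ᵀ := by
              simp [Matrix.transpose_mul, Matrix.mul_assoc]
        _ = U * (S * Γ) * Uᵀ := h
      rw [hSΓ, Matrix.fromBlocks_transpose] at h'
      have hDY : D * Y = 0 := by
        have := (Matrix.fromBlocks_inj.mp h').2.1
        simpa using this.symm
      calc Y = D⁻¹ * (D * Y) := by rw [← Matrix.mul_assoc, hDinv', Matrix.one_mul]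
      _ = 0 := by rw [hDY, Matrix.mul_zero]
    · intro h
      rw [hAH, hSΓ, h, Matrix.mul_zero]
      simp [Matrix.transpose_mul, Matrix.mul_assoc, Matrix.fromBlocks_transpose]
  · constructor
    · intro h
      rw [hHA] at h
      have h' : (Γ * S)ᵀ = Γ * S := by
        apply cancelV
        calc V * (Γ * S)ᵀ * Vᵀ = (V * (Γ * S) * Vᵀ)ᵀ := by
              simp [Matrix.transpose_mul, Matrix.mul_assoc]
        _ = V * (Γ * S) * Vᵀ := h
      rw [hΓS, Matrix.fromBlocks_transpose] at h'
      have hZD : Z * D = 0 := by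
        have := (Matrix.fromBlocks_inj.mp h').2.2.1
        simpa using this.symm
      calc Z = (Z * D) * D⁻¹ := by rw [Matrix.mul_assoc, hDinv, Matrix.mul_one]
      _ = 0 := by rw [hZD, Matrix.zero_mul]
    · intro h
      rw [hHA, hΓS, h, Matrix.zero_mul]
      simp [Matrix.transpose_mul, Matrix.mul_assoc, Matrix.fromBlocks_transpose]
  · have hHAH : H * A * H = V * (Γ * S * Γ) * Uᵀ := by
      rw [hHA, hH]
      simp only [Matrix.mul_assoc]
      rw [show Vᵀ * (V * (Γ * Uᵀ)) = (Vᵀ * V) * (Γ * Uᵀ) by simp [Matrix.mul_assoc], hV, Matrix.one_mul]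
    have hΓSΓ : Γ * S * Γ = Matrix.fromBlocks D⁻¹ Y Z (Z * D * Y) := by
      rw [hΓS, hΓdef, Matrix.fromBlocks_multiply]
      simp [Matrix.mul_assoc, hDinv]
    constructor
    · intro h
      rw [hHAH, hH, hΓSΓ] at h
      have := cancelVU _ _ h
      rw [hΓdef] at this
      exact ((Matrix.fromBlocks_inj.mp this).2.2.2).symm
    · intro h
      rw [hHAH, hΓSΓ, ← h, hH, hΓdef]
end

section
/- Let A ∈ ℝ^{m×n} have rank r, let T be a set of r column indices such that Â := A[·,T] has rank r, and let Ĥ := (Âᵀ Â)^{−1} Âᵀ. Then the n×m matrix H whose rows indexed by T equal Ĥ and whose other rows are zero satisfies AHA = A, HAH = H, and (AH)ᵀ = AH. -/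
open Matrix

lemma aux_isUnit_of_rank_eq {r : ℕ} (M : Matrix (Fin r) (Fin r) ℝ) (h : M.rank = r) :
    IsUnit M := by
  rw [← Matrix.mulVec_injective_iff_isUnit]
  have htop : LinearMap.range M.mulVecLin = ⊤ := by
    apply Submodule.eq_top_of_finrank_eq
    rw [← Matrix.rank, h, Module.finrank_pi]
    simp
  have hsurj : Function.Surjective M.mulVecLin := LinearMap.range_eq_top.mp htop
  exact LinearMap.injective_iff_surjective.mpr hsurj

/-- Column-block construction: if `Â := A[·,T]` has rank `r = rank A` and `H` has
rows `T` equal to `Ĥ := (ÂᵀÂ)⁻¹Âᵀ` and all other rows zero, then `H` is an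
ah-symmetric reflexive generalized inverse of `A`. -/
theorem column_block_ah_symmetric (m n r : ℕ) (A : Matrix (Fin m) (Fin n) ℝ)
    (hrA : A.rank = r)
    (T : Fin r → Fin n) (hT : Function.Injective T)
    (hr : (A.submatrix id T).rank = r)
    (H : Matrix (Fin n) (Fin m) ℝ)
    (hHrows : ∀ k, H (T k) =
      (((A.submatrix id T)ᵀ * A.submatrix id T)⁻¹ * (A.submatrix id T)ᵀ) k)
    (hHzero : ∀ j, (∀ k, T k ≠ j) → H j = 0) :
    A * H * A = A ∧ H * A * H = H ∧ (A * H)ᵀ = A * H := by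
  set B := A.submatrix id T with hB
  set G := (Bᵀ * B)⁻¹ * Bᵀ with hG
  -- embedding matrix
  set E : Matrix (Fin n) (Fin r) ℝ := fun j k => if j = T k then 1 else 0 with hE
  have hAE : A * E = B := by
    ext i k
    simp only [Matrix.mul_apply]; simp only [hE]
    rw [Finset.sum_eq_single (T k)]
    · simp [hB]
    · intro b _ hb; simp [hb]
    · intro h; exact absurd (Finset.mem_univ _) h
  have hHEG : H = E * G := by
    ext j i
    simp only [Matrix.mul_apply]; simp only [hE]
    by_cases hj : ∃ k, T k = j
    · obtain ⟨k0, rfl⟩ := hj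
      rw [Finset.sum_eq_single k0]
      · simpa [hG] using congrFun (hHrows k0) i
      · intro b _ hb
        have : T k0 ≠ T b := fun h => hb (hT h.symm)
        simp [this]
      · intro h; exact absurd (Finset.mem_univ _) h
    · push_neg at hj
      rw [hHzero j (fun k => hj k)]
      simp only [Pi.zero_apply]
      refine (Finset.sum_eq_zero ?_).symm
      intro k _
      simp [Ne.symm (hj k)]
  -- invertibility of BᵀB
  have hUnit : IsUnit (Bᵀ * B) := by
    apply aux_isUnit_of_rank_eq
    rw [Matrix.rank_transpose_mul_self]
    exact hr
  have hGB : G * B = 1 := by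
    rw [hG, Matrix.mul_assoc, Matrix.nonsing_inv_mul _ ((Matrix.isUnit_iff_isUnit_det _).mp hUnit)]
  -- column space equality: A = B * C
  have hrange : LinearMap.range B.mulVecLin = LinearMap.range A.mulVecLin := by
    apply Submodule.eq_of_le_of_finrank_eq
    · rw [← hAE, Matrix.mulVecLin_mul]
      exact LinearMap.range_comp_le_range _ _
    · rw [← Matrix.rank, ← Matrix.rank, hr, hrA]
  have hcols : ∀ j, ∃ v : Fin r → ℝ, B *ᵥ v = fun i => A i j := by
    intro j
    have : (fun i => A i j) ∈ LinearMap.range A.mulVecLin := by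
      exact ⟨Pi.single j 1, by ext i; simp [Matrix.mulVecLin, Matrix.mulVec_single]⟩
    rw [← hrange] at this
    obtain ⟨v, hv⟩ := this
    exact ⟨v, hv⟩
  choose C hC using hcols
  have hBC : B * (Matrix.of fun k j => C j k) = A := by
    ext i j
    have := congrFun (hC j) i
    simpa [Matrix.mul_apply, Matrix.mulVec, dotProduct] using this
  have hAH : A * H = B * G := by
    rw [hHEG, ← Matrix.mul_assoc, hAE]
  refine ⟨?_, ?_, ?_⟩
  · -- A * H * A = A
    conv_lhs => rw [hAH, ← hBC]
    rw [← Matrix.mul_assoc, Matrix.mul_assoc B G B, hGB, Matrix.mul_one, hBC]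
  · -- H * A * H = H
    rw [Matrix.mul_assoc, hAH, hHEG, ← Matrix.mul_assoc, ← Matrix.mul_assoc,
      Matrix.mul_assoc E G B, hGB, Matrix.mul_one, hG, Matrix.mul_assoc]
  · -- symmetry
    rw [hAH, hG, Matrix.transpose_mul, Matrix.transpose_mul, Matrix.transpose_nonsing_inv,
      Matrix.transpose_mul, Matrix.transpose_transpose, Matrix.mul_assoc]
end

section
/- Let Â ∈ ℝ^{m×r} with rank r. Then there exists an r×r matrix E such that for every i ∈ {1,…,r}: ‖E_{i·}Âᵀ‖₂ = 1 and E_{ii} = ‖Â†_{i·}‖₂, where Â† = (ÂᵀÂ)^{−1}Âᵀ is the Moore–Penrose pseudoinverse of Â. -/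
open Matrix

private lemma row_sq_sum (r' m' : ℕ) (B : Matrix (Fin r') (Fin m') ℝ) (i : Fin r') :
    ∑ j, (B i j) ^ 2 = (B * Bᵀ) i i := by
  simp [mul_apply, sq]

/-- For `Â ∈ ℝ^{m×r}` of rank `r`, there is an `r×r` matrix `E` with
`‖E_{i·}Âᵀ‖₂ = 1` and `E_{ii} = ‖Â†_{i·}‖₂` for each `i`,
where `Â† = (ÂᵀÂ)⁻¹Âᵀ`. -/
theorem exists_E_matrix (m r : ℕ) (Ahat : Matrix (Fin m) (Fin r) ℝ)
    (hr : Ahat.rank = r) :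
    ∃ E : Matrix (Fin r) (Fin r) ℝ, ∀ i,
      Real.sqrt (∑ j, ((E * Ahatᵀ) i j) ^ 2) = 1 ∧
      E i i = Real.sqrt (∑ j, (((Ahatᵀ * Ahat)⁻¹ * Ahatᵀ) i j) ^ 2) := by
  set G := Ahatᵀ * Ahat with hGdef
  -- mulVecLin of Ahat is injective
  have hker : ∀ x : Fin r → ℝ, Ahat *ᵥ x = 0 → x = 0 := by
    have h1 := Ahat.mulVecLin.finrank_range_add_finrank_ker
    rw [show Module.finrank ℝ (LinearMap.range Ahat.mulVecLin) = Ahat.rank from rfl, hr] at h1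
    simp only [Module.finrank_pi, Fintype.card_fin] at h1
    have h2 : Module.finrank ℝ (LinearMap.ker Ahat.mulVecLin) = 0 := by omega
    have h3 : LinearMap.ker Ahat.mulVecLin = ⊥ :=
      Submodule.finrank_eq_zero.mp h2
    intro x hx
    have : x ∈ LinearMap.ker Ahat.mulVecLin := by simpa [Matrix.mulVecLin] using hx
    simpa [h3] using this
  have hG : G.PosDef := by
    refine Matrix.PosDef.of_dotProduct_mulVec_pos (Matrix.isHermitian_conjTranspose_mul_self Ahat) fun x hx => ?_
    have hne : Ahat *ᵥ x ≠ 0 := fun h => hx (hker x h)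
    have key : star x ⬝ᵥ (G *ᵥ x) = (Ahat *ᵥ x) ⬝ᵥ (Ahat *ᵥ x) := by
      rw [hGdef, ← Matrix.mulVec_mulVec, show (star x) = x from rfl,
        Matrix.dotProduct_mulVec, Matrix.vecMul_transpose]
    rw [key]
    have : 0 ≤ (Ahat *ᵥ x) ⬝ᵥ (Ahat *ᵥ x) := by
      simp only [dotProduct]
      exact Finset.sum_nonneg fun j _ => mul_self_nonneg _
    rcases this.lt_or_eq with h | h
    · exact h
    · exact absurd (dotProduct_self_eq_zero.mp h.symm) hne
  have hdet : IsUnit G.det := isUnit_iff_ne_zero.mpr (ne_of_gt hG.det_pos)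
  have hGinv : (G⁻¹).PosDef := hG.inv
  have hdiag : ∀ i, 0 < G⁻¹ i i := by
    intro i
    have h := hGinv.dotProduct_mulVec_pos (x := Pi.single i 1) (by
      intro h
      have := congrFun h i
      simp at this)
    simpa [Matrix.mulVec_single, single_dotProduct] using h
  have hsymm : (G⁻¹)ᵀ = G⁻¹ := by
    have := hGinv.1
    rwa [Matrix.IsHermitian, Matrix.conjTranspose_eq_transpose_of_trivial] at this
  have hinvGinv : G⁻¹ * G * G⁻¹ = G⁻¹ := by
    rw [Matrix.nonsing_inv_mul G hdet, Matrix.one_mul]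
  set d : Fin r → ℝ := fun i => (Real.sqrt (G⁻¹ i i))⁻¹ with hd
  refine ⟨Matrix.diagonal d * G⁻¹, fun i => ?_⟩
  set s : ℝ := G⁻¹ i i with hs
  have hspos : 0 < s := hdiag i
  have hsq : Real.sqrt s * Real.sqrt s = s := Real.mul_self_sqrt hspos.le
  have hsqrtpos : 0 < Real.sqrt s := Real.sqrt_pos.mpr hspos
  constructor
  · rw [row_sq_sum]
    have : (Matrix.diagonal d * G⁻¹ * Ahatᵀ) * (Matrix.diagonal d * G⁻¹ * Ahatᵀ)ᵀ
        = Matrix.diagonal d * (G⁻¹ * G * G⁻¹) * Matrix.diagonal d := by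
      rw [Matrix.transpose_mul, Matrix.transpose_mul, Matrix.transpose_transpose,
        Matrix.diagonal_transpose, hsymm, hGdef]
      simp only [Matrix.mul_assoc]
    rw [this, hinvGinv, Matrix.mul_diagonal, Matrix.diagonal_mul]
    show Real.sqrt (d i * (G⁻¹ i i) * d i) = 1
    rw [← hs, hd]
    have : (Real.sqrt s)⁻¹ * s * (Real.sqrt s)⁻¹ = 1 := by
      field_simp
      exact (Real.sq_sqrt hspos.le).symm
    rw [this, Real.sqrt_one]
  · rw [row_sq_sum]
    have : (G⁻¹ * Ahatᵀ) * (G⁻¹ * Ahatᵀ)ᵀ = G⁻¹ * G * G⁻¹ := by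
      rw [Matrix.transpose_mul, Matrix.transpose_transpose, hsymm, hGdef]
      simp only [Matrix.mul_assoc]
    rw [this, hinvGinv, ← hs]
    show (Matrix.diagonal d * G⁻¹) i i = Real.sqrt s
    rw [Matrix.diagonal_mul, ← hs, hd]
    show (Real.sqrt s)⁻¹ * s = Real.sqrt s
    rw [← hsq]
    field_simp
    rw [Real.sqrt_sq hsqrtpos.le]
end

section
/- Let A ∈ ℝ^{m×r} with rank r, and let γ ∈ range(A). Let v := A†γ, and suppose v_j ≠ 0 for some index j. Let Ā be A with its j-th column replaced by γ. Then Ā has rank r and Ā† = Θ^{−1} A†, where Θ is the identity matrix with its j-th column replaced by v. Explicitly, Ā†_{i·} = A†_{i·} + v̄_i·A†_{j·} for i ≠ j, and Ā†_{j·} = v̄_j·A†_{j·}, where v̄ := (1/v_j)(−v₁,…,−v_{j−1}, 1, −v_{j+1},…,−v_r)ᵀ. -/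
open Matrix

lemma updateColumn_one_mul_apply {r s : ℕ} (v : Fin r → ℝ) (j : Fin r)
    (P : Matrix (Fin r) (Fin s) ℝ) (i : Fin r) (k : Fin s) :
    (((1 : Matrix (Fin r) (Fin r) ℝ).updateCol j v) * P) i k
      = P i k + (v i - if i = j then 1 else 0) * P j k := by
  rw [Matrix.mul_apply]
  have h : ∀ l, ((1 : Matrix (Fin r) (Fin r) ℝ).updateCol j v) i l * P l k
      = (if i = l then P l k else 0)
        + (if l = j then (v i - if i = j then 1 else 0) * P j k else 0) := by
    intro l
    rw [Matrix.updateCol_apply, Matrix.one_apply]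
    by_cases hl : l = j
    · by_cases hij : i = j
      · simp [hl, hij]
        ring
      · simp [hl, hij]
    · simp [hl]
  simp_rw [h]
  rw [Finset.sum_add_distrib, Finset.sum_ite_eq, Finset.sum_ite_eq']
  simp

/-- Column replacement and the pseudoinverse: if `Ā` is `A` with column `j` replaced by
`γ ∈ range(A)` and `v := A†γ` has `v_j ≠ 0`, then `Ā` has rank `r`,
`Ā† = Θ⁻¹ A†` where `Θ` is the identity with column `j` replaced by `v`, and explicitly
`Ā†_{i·} = A†_{i·} + v̄_i A†_{j·}` for `i ≠ j` and `Ā†_{j·} = v̄_j A†_{j·}`. -/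
theorem pinv_column_replacement (m r : ℕ) (A : Matrix (Fin m) (Fin r) ℝ)
    (hr : A.rank = r) (γ : Fin m → ℝ) (hγ : ∃ x, A.mulVec x = γ)
    (j : Fin r)
    (hvj : ((Aᵀ * A)⁻¹ * Aᵀ).mulVec γ j ≠ 0) :
    (A.updateCol j γ).rank = r ∧
    ((A.updateCol j γ)ᵀ * A.updateCol j γ)⁻¹ * (A.updateCol j γ)ᵀ =
      ((1 : Matrix (Fin r) (Fin r) ℝ).updateCol j (((Aᵀ * A)⁻¹ * Aᵀ).mulVec γ))⁻¹ *
        ((Aᵀ * A)⁻¹ * Aᵀ) ∧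
    (∀ i, i ≠ j →
      (((A.updateCol j γ)ᵀ * A.updateCol j γ)⁻¹ * (A.updateCol j γ)ᵀ) i =
        ((Aᵀ * A)⁻¹ * Aᵀ) i +
          (-(((Aᵀ * A)⁻¹ * Aᵀ).mulVec γ i) / ((Aᵀ * A)⁻¹ * Aᵀ).mulVec γ j) •
            ((Aᵀ * A)⁻¹ * Aᵀ) j) ∧
    (((A.updateCol j γ)ᵀ * A.updateCol j γ)⁻¹ * (A.updateCol j γ)ᵀ) j =
      (1 / ((Aᵀ * A)⁻¹ * Aᵀ).mulVec γ j) • ((Aᵀ * A)⁻¹ * Aᵀ) j := by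
  set P := (Aᵀ * A)⁻¹ * Aᵀ with hP
  set v := P.mulVec γ with hv
  obtain ⟨x, hx⟩ := hγ
  -- `AᵀA` is invertible
  have hAtA : IsUnit (Aᵀ * A) := by
    rw [← Matrix.mulVec_surjective_iff_isUnit]
    have hrk : (Aᵀ * A).rank = r := by rw [Matrix.rank_transpose_mul_self, hr]
    have hrange : LinearMap.range (Aᵀ * A).mulVecLin = ⊤ := by
      apply Submodule.eq_top_of_finrank_eq
      have : Module.finrank ℝ (LinearMap.range (Aᵀ * A).mulVecLin) = (Aᵀ * A).rank := rfl
      rw [this, hrk, Module.finrank_fin_fun]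
    intro y
    obtain ⟨z, hz⟩ := LinearMap.range_eq_top.mp hrange y
    exact ⟨z, hz⟩
  have hdet : IsUnit (Aᵀ * A).det := (Matrix.isUnit_iff_isUnit_det _).mp hAtA
  have hPA : P * A = 1 := by
    rw [hP, Matrix.mul_assoc, Matrix.nonsing_inv_mul _ hdet]
  have hγv : A.mulVec v = γ := by
    have hvx : v = x := by
      rw [hv, ← hx, Matrix.mulVec_mulVec, hPA, Matrix.one_mulVec]
    rw [hvx, hx]
  set Θ := (1 : Matrix (Fin r) (Fin r) ℝ).updateCol j v with hΘ
  set vb : Fin r → ℝ := fun i => if i = j then 1 / v j else -(v i) / v j with hvb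
  set Θ' := (1 : Matrix (Fin r) (Fin r) ℝ).updateCol j vb with hΘ'
  have hΘmul : Θ * Θ' = 1 := by
    ext i k
    rw [hΘ, updateColumn_one_mul_apply, Matrix.one_apply, hΘ',
      Matrix.updateCol_apply, Matrix.updateCol_apply, Matrix.one_apply,
      Matrix.one_apply]
    by_cases hk : k = j
    · rw [if_pos hk, if_pos hk, hvb]
      simp only [if_pos rfl, hk, ↓reduceIte]
      by_cases hij : i = j
      · simp only [hij, if_pos rfl, ↓reduceIte]
        field_simp
        ring
      · simp only [if_neg hij]
        field_simp
        ring
    · have hjk : (if j = k then (1:ℝ) else 0) = 0 := if_neg (fun h => hk h.symm)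
      rw [if_neg hk, if_neg hk, hjk, mul_zero, add_zero]
  have hΘdet : IsUnit Θ.det := Matrix.isUnit_det_of_right_inverse hΘmul
  have hΘinv : Θ⁻¹ = Θ' := Matrix.inv_eq_right_inv hΘmul
  have hAbar : A.updateCol j γ = A * Θ := by
    ext i k
    rw [Matrix.updateCol_apply, Matrix.mul_apply]
    by_cases hk : k = j
    · subst hk
      rw [if_pos rfl, ← hγv]
      simp [Matrix.mulVec, dotProduct, hΘ, Matrix.updateCol_apply]
    · rw [if_neg hk]
      have h1 : ∀ l, Θ l k = (1 : Matrix (Fin r) (Fin r) ℝ) l k := fun l => by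
        rw [hΘ, Matrix.updateCol_apply, if_neg hk]
      simp_rw [h1]
      rw [← Matrix.mul_apply, Matrix.mul_one]
  have hrank : (A.updateCol j γ).rank = r := by
    rw [hAbar, Matrix.rank_mul_eq_left_of_isUnit_det _ _ hΘdet, hr]
  have hmain : ((A.updateCol j γ)ᵀ * A.updateCol j γ)⁻¹ * (A.updateCol j γ)ᵀ
      = Θ⁻¹ * P := by
    rw [hAbar, Matrix.transpose_mul]
    have h1 : Θᵀ * Aᵀ * (A * Θ) = Θᵀ * (Aᵀ * A) * Θ := by
      simp [Matrix.mul_assoc]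
    rw [h1, Matrix.mul_inv_rev, Matrix.mul_inv_rev]
    have hΘT : (Θᵀ)⁻¹ * Θᵀ = 1 :=
      Matrix.nonsing_inv_mul _ (by rwa [Matrix.det_transpose])
    rw [hP, Matrix.mul_assoc, Matrix.mul_assoc, ← Matrix.mul_assoc (Θᵀ)⁻¹, hΘT,
      Matrix.one_mul]
  refine ⟨hrank, hmain, ?_, ?_⟩
  · intro i hij
    rw [hmain, hΘinv]
    funext k
    rw [hΘ', updateColumn_one_mul_apply, if_neg hij, hvb]
    simp only [Pi.add_apply, Pi.smul_apply, smul_eq_mul, if_neg hij]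
    ring
  · rw [hmain, hΘinv]
    funext k
    rw [hΘ', updateColumn_one_mul_apply, if_pos rfl, hvb]
    simp only [Pi.smul_apply, smul_eq_mul, if_pos rfl, ↓reduceIte]
    field_simp
    ring
end

section
/- Let A ∈ ℝ^{m×r} with rank r, γ ∈ range(A), v = A†γ with v_j ≠ 0, and Ā be A with column j replaced by γ. Then ‖Ā†‖_{2,1} = |v̄_j|·‖A†_{j·}‖₂ + Σ_{i≠j} ( ‖A†_{i·}‖₂² + 2v̄_i·A†_{i·}(A†_{j·})ᵀ + v̄_i²·‖A†_{j·}‖₂² )^{1/2}, where v̄ := (1/v_j)(−v₁,…,−v_{j−1}, 1, −v_{j+1},…,−v_r)ᵀ. -/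
open Matrix Finset

/-- 2,1-norm of the pseudoinverse after a column replacement: with `v = A†γ`, `v_j ≠ 0`,
`v̄_i = -v_i/v_j` for `i ≠ j`, `v̄_j = 1/v_j`, and `Ā` equal to `A` with column `j`
replaced by `γ`, we have
`‖Ā†‖_{2,1} = |v̄_j|‖A†_{j·}‖₂ + ∑_{i≠j} (‖A†_{i·}‖₂² + 2v̄_i⟨A†_{i·},A†_{j·}⟩ + v̄_i²‖A†_{j·}‖₂²)^{1/2}`. -/
theorem norm21_pinv_column_replacement (m r : ℕ) (A : Matrix (Fin m) (Fin r) ℝ)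
    (hr : A.rank = r) (γ : Fin m → ℝ) (hγ : ∃ x, A.mulVec x = γ)
    (j : Fin r) (v : Fin r → ℝ) (hv : v = ((Aᵀ * A)⁻¹ * Aᵀ).mulVec γ)
    (hvj : v j ≠ 0)
    (vbar : Fin r → ℝ) (hvbar : ∀ i, vbar i = if i = j then 1 / v j else -(v i) / v j) :
    (∑ i, Real.sqrt (∑ k,
        ((((A.updateCol j γ)ᵀ * A.updateCol j γ)⁻¹ * (A.updateCol j γ)ᵀ) i k) ^ 2)) =
      |vbar j| * Real.sqrt (∑ k, (((Aᵀ * A)⁻¹ * Aᵀ) j k) ^ 2) +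
      ∑ i ∈ univ.erase j, Real.sqrt
        ((∑ k, (((Aᵀ * A)⁻¹ * Aᵀ) i k) ^ 2) +
          2 * vbar i * (∑ k, ((Aᵀ * A)⁻¹ * Aᵀ) i k * ((Aᵀ * A)⁻¹ * Aᵀ) j k) +
          vbar i ^ 2 * (∑ k, (((Aᵀ * A)⁻¹ * Aᵀ) j k) ^ 2)) := by
  classical
  set P : Matrix (Fin r) (Fin m) ℝ := (Aᵀ * A)⁻¹ * Aᵀ with hP
  set E : Matrix (Fin r) (Fin r) ℝ := (1 : Matrix (Fin r) (Fin r) ℝ).updateCol j v with hE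
  set F : Matrix (Fin r) (Fin r) ℝ := (1 : Matrix (Fin r) (Fin r) ℝ).updateCol j vbar with hF
  -- `AᵀA` is invertible
  have hUnit : IsUnit (Aᵀ * A) := by
    rw [← Matrix.mulVec_surjective_iff_isUnit]
    have hRank : (Aᵀ * A).rank = r := by rw [Matrix.rank_transpose_mul_self, hr]
    have htop : LinearMap.range (Aᵀ * A).mulVecLin = ⊤ := by
      apply Submodule.eq_top_of_finrank_eq
      rw [show Module.finrank ℝ (Fin r → ℝ) = r by simp]
      exact hRank
    intro y
    obtain ⟨x, hx⟩ := LinearMap.range_eq_top.mp htop y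
    exact ⟨x, hx⟩
  have hUnitDet : IsUnit (Aᵀ * A).det := (Matrix.isUnit_iff_isUnit_det _).mp hUnit
  -- `A v = γ`
  have hAv : A.mulVec v = γ := by
    obtain ⟨x, hx⟩ := hγ
    rw [hv, ← hx, Matrix.mulVec_mulVec, Matrix.mulVec_mulVec]
    rw [hP, Matrix.mul_assoc A, Matrix.mul_assoc ((Aᵀ * A)⁻¹),
      Matrix.nonsing_inv_mul _ hUnitDet, Matrix.mul_one]
  -- `Ā = A * E`
  have hAE : A.updateCol j γ = A * E := by
    ext i k
    rw [Matrix.mul_apply, Matrix.updateCol_apply]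
    by_cases hk : k = j
    · rw [if_pos hk, ← hAv]
      rw [show (∑ l, A i l * E l k) = ∑ l, A i l * v l from
        Finset.sum_congr rfl fun l _ => by rw [hE, Matrix.updateCol_apply, if_pos hk]]
      rfl
    · rw [if_neg hk]
      rw [show (∑ l, A i l * E l k) = ∑ l, (if l = k then A i l else 0) from
        Finset.sum_congr rfl fun l _ => by
          rw [hE, Matrix.updateCol_apply, if_neg hk]
          by_cases h : l = k <;> simp [Matrix.one_apply, h]]
      simp
  -- key summation helper
  have hsum : ∀ (c : ℝ) (w : Fin r → ℝ) (i : Fin r),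
      (∑ l, (if l = j then c else (1 : Matrix (Fin r) (Fin r) ℝ) i l) * w l)
        = c * w j + (if i ∈ univ.erase j then w i else 0) := by
    intro c w i
    rw [← Finset.add_sum_erase _ _ (mem_univ j), if_pos rfl]
    congr 1
    calc (∑ l ∈ univ.erase j,
            (if l = j then c else (1 : Matrix (Fin r) (Fin r) ℝ) i l) * w l)
        = ∑ l ∈ univ.erase j, (if i = l then w l else 0) := by
          refine Finset.sum_congr rfl fun l hl => ?_
          rw [if_neg (Finset.ne_of_mem_erase hl)]
          by_cases h : i = l <;> simp [Matrix.one_apply, h]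
      _ = if i ∈ univ.erase j then w i else 0 := Finset.sum_ite_eq _ _ _
  have hmem : ∀ i : Fin r, i ≠ j → i ∈ univ.erase j :=
    fun i hij => Finset.mem_erase.mpr ⟨hij, mem_univ i⟩
  -- `F * E = 1`
  have hFE : F * E = 1 := by
    ext i k
    rw [Matrix.mul_apply]
    by_cases hk : k = j
    · rw [show (∑ l, F i l * E l k)
          = ∑ l, (if l = j then vbar i else (1 : Matrix (Fin r) (Fin r) ℝ) i l) * v l from
        Finset.sum_congr rfl fun l _ => by
          rw [hF, hE, Matrix.updateCol_apply, Matrix.updateCol_apply, if_pos hk]]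
      rw [hsum]
      by_cases hij : i = j
      · rw [hij, hvbar j, if_pos rfl]
        simp [Matrix.one_apply, hk, hij, one_div, inv_mul_cancel₀ hvj]
      · rw [hvbar i, if_neg hij, if_pos (hmem i hij), hk, Matrix.one_apply_ne hij]
        field_simp
        ring
    · rw [show (∑ l, F i l * E l k) = ∑ l, (if l = k then F i l else 0) from
        Finset.sum_congr rfl fun l _ => by
          rw [hE, Matrix.updateCol_apply, if_neg hk]
          by_cases h : l = k <;> simp [Matrix.one_apply, h]]
      rw [Finset.sum_ite_eq' univ k (fun l => F i l), if_pos (mem_univ k)]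
      rw [hF, Matrix.updateCol_apply, if_neg hk]
  -- `E * F = 1`
  have hEF : E * F = 1 := by
    ext i k
    rw [Matrix.mul_apply]
    by_cases hk : k = j
    · rw [show (∑ l, E i l * F l k)
          = ∑ l, (if l = j then v i else (1 : Matrix (Fin r) (Fin r) ℝ) i l) * vbar l from
        Finset.sum_congr rfl fun l _ => by
          rw [hF, hE, Matrix.updateCol_apply, Matrix.updateCol_apply, if_pos hk]]
      rw [hsum]
      by_cases hij : i = j
      · rw [hij, hvbar j, if_pos rfl]
        simp [Matrix.one_apply, hk, hij, hvj]
      · rw [hvbar j, if_pos rfl, if_pos (hmem i hij), hvbar i, if_neg hij, hk,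
          Matrix.one_apply_ne hij]
        field_simp
        ring
    · rw [show (∑ l, E i l * F l k) = ∑ l, (if l = k then E i l else 0) from
        Finset.sum_congr rfl fun l _ => by
          rw [hF, Matrix.updateCol_apply, if_neg hk]
          by_cases h : l = k <;> simp [Matrix.one_apply, h]]
      rw [Finset.sum_ite_eq' univ k (fun l => E i l), if_pos (mem_univ k)]
      rw [hE, Matrix.updateCol_apply, if_neg hk]
  have hEdet : IsUnit E.det := Matrix.isUnit_det_of_left_inverse hFE
  have hEinv : E⁻¹ = F := Matrix.inv_eq_left_inv hFE
  -- key identity: `Ā† = F * P`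
  have hkey : ((A.updateCol j γ)ᵀ * A.updateCol j γ)⁻¹ * (A.updateCol j γ)ᵀ
      = F * P := by
    rw [hAE, Matrix.transpose_mul]
    have h1 : Eᵀ * Aᵀ * (A * E) = Eᵀ * (Aᵀ * A) * E := by
      rw [Matrix.mul_assoc (Eᵀ) (Aᵀ), ← Matrix.mul_assoc (Aᵀ), ← Matrix.mul_assoc]
    rw [h1, Matrix.mul_inv_rev, Matrix.mul_inv_rev, hEinv, hP]
    rw [Matrix.mul_assoc F, Matrix.mul_assoc ((Aᵀ * A)⁻¹), ← Matrix.mul_assoc (Eᵀ)⁻¹,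
      Matrix.nonsing_inv_mul _ (by rwa [Matrix.det_transpose]), Matrix.one_mul]
  -- entries of `F * P`
  have hFP : ∀ i k, (F * P) i k
      = if i = j then vbar j * P j k else P i k + vbar i * P j k := by
    intro i k
    rw [Matrix.mul_apply]
    rw [show (∑ l, F i l * P l k)
        = ∑ l, (if l = j then vbar i else (1 : Matrix (Fin r) (Fin r) ℝ) i l) * P l k from
      Finset.sum_congr rfl fun l _ => by rw [hF, Matrix.updateCol_apply]]
    rw [hsum]
    by_cases hij : i = j
    · rw [if_pos hij, hij]; simp
    · rw [if_neg hij, if_pos (hmem i hij)]; ring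
  -- put it together
  rw [show (∑ i, Real.sqrt (∑ k,
        ((((A.updateCol j γ)ᵀ * A.updateCol j γ)⁻¹ * (A.updateCol j γ)ᵀ) i k) ^ 2))
      = ∑ i, Real.sqrt (∑ k, ((F * P) i k) ^ 2) by rw [hkey]]
  rw [← Finset.add_sum_erase _ _ (mem_univ j)]
  congr 1
  · -- the `i = j` term
    have : (∑ k, ((F * P) j k) ^ 2) = vbar j ^ 2 * ∑ k, (P j k) ^ 2 := by
      rw [Finset.mul_sum]
      refine Finset.sum_congr rfl fun k _ => ?_
      rw [hFP j k, if_pos rfl]; ring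
    rw [this, Real.sqrt_mul (sq_nonneg _), Real.sqrt_sq_eq_abs]
  · -- the `i ≠ j` terms
    refine Finset.sum_congr rfl fun i hi => ?_
    have hij : i ≠ j := Finset.ne_of_mem_erase hi
    congr 1
    rw [Finset.mul_sum, Finset.mul_sum, ← Finset.sum_add_distrib, ← Finset.sum_add_distrib]
    refine Finset.sum_congr rfl fun k _ => ?_
    rw [hFP i k, if_neg hij]; ring
end

section
/- Let Y ∈ ℝ^{n×r}, ρ > 0, and γ ∈ ℕ with γ ≤ n. Let τ be a permutation of {1,…,n} such that ‖Y_{τ₁·}‖₂ ≥ ‖Y_{τ₂·}‖₂ ≥ … ≥ ‖Y_{τₙ·}‖₂. Then the matrix E with rows E_{τᵢ·} = ((‖Y_{τᵢ·}‖₂ − 1/ρ)/‖Y_{τᵢ·}‖₂)·Y_{τᵢ·} when 1/ρ < ‖Y_{τᵢ·}‖₂ and i ≤ γ, and E_{τᵢ·} = 0 otherwise, minimizes ‖E‖_{2,1} + (ρ/2)‖E − Y‖_F² over all E ∈ ℝ^{n×r} with at most γ nonzero rows. -/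
open Matrix Finset

noncomputable def gfun (ρ x : ℝ) : ℝ :=
  if 1 / ρ < x then ρ / 2 * x ^ 2 - (x - 1 / (2 * ρ)) else 0

lemma gfun_nonneg {ρ : ℝ} (hρ : 0 < ρ) (x : ℝ) : 0 ≤ gfun ρ x := by
  unfold gfun
  split_ifs with h
  · have h1 : 1 < x * ρ := (div_lt_iff₀ hρ).mp h
    have hq : 1 / (2 * ρ) * (2 * ρ) = 1 := div_mul_cancel₀ 1 (by positivity)
    nlinarith [sq_nonneg (ρ * x - 1), hρ]
  · exact le_refl 0

lemma gfun_mono {ρ : ℝ} (hρ : 0 < ρ) {x y : ℝ} (hx : 0 ≤ x) (hxy : x ≤ y) :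
    gfun ρ x ≤ gfun ρ y := by
  unfold gfun
  split_ifs with h1 h2 h2
  · have ha : 1 < x * ρ := (div_lt_iff₀ hρ).mp h1
    have hb : 1 < y * ρ := (div_lt_iff₀ hρ).mp h2
    nlinarith [hρ, sq_nonneg (x + y)]
  · exact absurd (lt_of_lt_of_le h1 hxy) h2
  · have hq : 1 / (2 * ρ) * (2 * ρ) = 1 := div_mul_cancel₀ 1 (by positivity)
    have hb : 1 < y * ρ := (div_lt_iff₀ hρ).mp h2
    nlinarith [sq_nonneg (ρ * y - 1), hρ]
  · exact le_refl 0

lemma row_lb {r : ℕ} {ρ : ℝ} (hρ : 0 < ρ) (y e : Fin r → ℝ) :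
    (if 1 / ρ < Real.sqrt (∑ j, y j ^ 2) then Real.sqrt (∑ j, y j ^ 2) - 1 / (2 * ρ)
     else ρ / 2 * Real.sqrt (∑ j, y j ^ 2) ^ 2)
    ≤ Real.sqrt (∑ j, e j ^ 2) + ρ / 2 * ∑ j, (e j - y j) ^ 2 := by
  set s := Real.sqrt (∑ j, y j ^ 2) with hs
  set t := Real.sqrt (∑ j, e j ^ 2) with ht
  have hs0 : 0 ≤ s := Real.sqrt_nonneg _
  have ht0 : 0 ≤ t := Real.sqrt_nonneg _
  have hs2 : s ^ 2 = ∑ j, y j ^ 2 := Real.sq_sqrt (Finset.sum_nonneg fun j _ => sq_nonneg _)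
  have ht2 : t ^ 2 = ∑ j, e j ^ 2 := Real.sq_sqrt (Finset.sum_nonneg fun j _ => sq_nonneg _)
  have hcs : ∑ j, e j * y j ≤ t * s := by
    have h1 := Finset.sum_mul_sq_le_sq_mul_sq Finset.univ e y
    calc ∑ j, e j * y j ≤ |∑ j, e j * y j| := le_abs_self _
      _ = Real.sqrt ((∑ j, e j * y j) ^ 2) := (Real.sqrt_sq_eq_abs _).symm
      _ ≤ Real.sqrt ((∑ j, e j ^ 2) * ∑ j, y j ^ 2) := Real.sqrt_le_sqrt h1
      _ = t * s := by
          rw [Real.sqrt_mul (Finset.sum_nonneg fun j _ => sq_nonneg _)]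
  have hexp : ∑ j, (e j - y j) ^ 2 = t ^ 2 - 2 * (∑ j, e j * y j) + s ^ 2 := by
    rw [hs2, ht2, Finset.mul_sum, ← Finset.sum_sub_distrib, ← Finset.sum_add_distrib]
    exact Finset.sum_congr rfl fun j _ => by ring
  have hD : (t - s) ^ 2 ≤ ∑ j, (e j - y j) ^ 2 := by rw [hexp]; nlinarith [hcs]
  split_ifs with h
  · have h1 : 1 < s * ρ := (div_lt_iff₀ hρ).mp h
    have hq : 1 / (2 * ρ) * (2 * ρ) = 1 := div_mul_cancel₀ 1 (by positivity)
    nlinarith [sq_nonneg (ρ * (t - s) + 1), hρ, mul_le_mul_of_nonneg_left hD (by positivity : (0:ℝ) ≤ ρ / 2)]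
  · have h1 : s * ρ ≤ 1 := not_lt.mp fun hc => h ((div_lt_iff₀ hρ).mpr hc)
    nlinarith [mul_le_mul_of_nonneg_left hD (by positivity : (0:ℝ) ≤ ρ / 2),
      mul_nonneg ht0 (sub_nonneg.mpr h1), sq_nonneg t, hρ.le]

lemma row_shrink_val {r : ℕ} {ρ : ℝ} (hρ : 0 < ρ) (y : Fin r → ℝ)
    (h : 1 / ρ < Real.sqrt (∑ j, y j ^ 2)) :
    Real.sqrt (∑ j, (((Real.sqrt (∑ j', y j' ^ 2) - 1 / ρ) / Real.sqrt (∑ j', y j' ^ 2)) * y j) ^ 2)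
      + ρ / 2 * ∑ j, (((Real.sqrt (∑ j', y j' ^ 2) - 1 / ρ) / Real.sqrt (∑ j', y j' ^ 2)) * y j - y j) ^ 2
    = Real.sqrt (∑ j, y j ^ 2) - 1 / (2 * ρ) := by
  set s := Real.sqrt (∑ j, y j ^ 2) with hs
  have hspos : 0 < s := lt_of_le_of_lt (by positivity) h
  have hs2 : s ^ 2 = ∑ j, y j ^ 2 := Real.sq_sqrt (Finset.sum_nonneg fun j _ => sq_nonneg _)
  set c := (s - 1 / ρ) / s with hc
  have hc0 : 0 ≤ c := div_nonneg (by linarith [le_of_lt h, (by positivity : (0:ℝ) ≤ 1/ρ)]) hspos.le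
  have h1 : ∑ j, (c * y j) ^ 2 = c ^ 2 * s ^ 2 := by
    rw [hs2, Finset.mul_sum]; exact Finset.sum_congr rfl fun j _ => by ring
  have h2 : ∑ j, (c * y j - y j) ^ 2 = (c - 1) ^ 2 * s ^ 2 := by
    rw [hs2, Finset.mul_sum]; exact Finset.sum_congr rfl fun j _ => by ring
  rw [h1, h2]
  have h3 : Real.sqrt (c ^ 2 * s ^ 2) = c * s := by
    rw [← mul_pow, Real.sqrt_sq (mul_nonneg hc0 hspos.le)]
  rw [h3, hc]
  have hsne : s ≠ 0 := hspos.ne'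
  have hρne : ρ ≠ 0 := hρ.ne'
  field_simp
  ring

lemma filter_lt_eq_map {n k : ℕ} (hk : k ≤ n) :
    (univ.filter fun i : Fin n => (i : ℕ) < k) = Finset.map (Fin.castLEEmb hk) univ := by
  ext i
  simp only [mem_filter, mem_univ, true_and, Finset.mem_map, Fin.castLEEmb,
    Function.Embedding.coeFn_mk]
  constructor
  · intro h
    exact ⟨⟨i, h⟩, by simp⟩
  · rintro ⟨a, -, rfl⟩; exact a.isLt

lemma strictMono_fin_le {k n : ℕ} {f : Fin k → Fin n} (hf : StrictMono f) (i : Fin k) :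
    (i : ℕ) ≤ (f i : ℕ) := by
  rcases k with - | k
  · exact i.elim0
  · induction i using Fin.induction with
    | zero => exact Nat.zero_le _
    | succ i ih =>
        have h1 : f i.castSucc < f i.succ := hf (Fin.castSucc_lt_succ (i := i))
        have h2 : ((f i.castSucc : ℕ)) < (f i.succ : ℕ) := h1
        have h3 : ((i.castSucc : Fin (k+1)) : ℕ) = (i : ℕ) := Fin.coe_castSucc i
        simp only [Fin.val_succ]
        omega

open Classical in
/-- Truncated row-wise shrinkage: with rows of `Y` sorted by decreasing 2-norm via the
permutation `τ`, the matrix `E` that applies row-shrinkage to the `γ` rows of largest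
norm and zeros out the remaining rows minimizes `‖E‖_{2,1} + (ρ/2)‖E − Y‖_F²`
over matrices with at most `γ` nonzero rows. -/
theorem truncated_row_shrinkage_minimizer (n r : ℕ) (Y : Matrix (Fin n) (Fin r) ℝ)
    (ρ : ℝ) (hρ : 0 < ρ) (γ : ℕ) (hγ : γ ≤ n)
    (τ : Equiv.Perm (Fin n))
    (hτ : ∀ i i' : Fin n, i ≤ i' →
      Real.sqrt (∑ j, (Y (τ i') j) ^ 2) ≤ Real.sqrt (∑ j, (Y (τ i) j) ^ 2))
    (E : Matrix (Fin n) (Fin r) ℝ)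
    (hE : ∀ i : Fin n, E (τ i) =
      if 1 / ρ < Real.sqrt (∑ j, (Y (τ i) j) ^ 2) ∧ (i : ℕ) < γ then
        fun j => ((Real.sqrt (∑ j', (Y (τ i) j') ^ 2) - 1 / ρ) /
          Real.sqrt (∑ j', (Y (τ i) j') ^ 2)) * Y (τ i) j
      else 0) :
    ((univ.filter fun i : Fin n => E i ≠ 0).card ≤ γ) ∧
    ∀ F : Matrix (Fin n) (Fin r) ℝ,
      (univ.filter fun i : Fin n => F i ≠ 0).card ≤ γ →
      (∑ i, Real.sqrt (∑ j, (E i j) ^ 2)) + ρ / 2 * (∑ i, ∑ j, (E i j - Y i j) ^ 2) ≤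
      (∑ i, Real.sqrt (∑ j, (F i j) ^ 2)) + ρ / 2 * (∑ i, ∑ j, (F i j - Y i j) ^ 2) := by
  classical
  set s : Fin n → ℝ := fun i => Real.sqrt (∑ j, (Y (τ i) j) ^ 2) with hsdef
  have hs0 : ∀ i, 0 ≤ s i := fun i => Real.sqrt_nonneg _
  have hs2 : ∀ i, s i ^ 2 = ∑ j, (Y (τ i) j) ^ 2 :=
    fun i => Real.sq_sqrt (Finset.sum_nonneg fun j _ => sq_nonneg _)
  have hcardγ : (univ.filter fun i : Fin n => (i : ℕ) < γ).card = γ := by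
    rw [filter_lt_eq_map hγ, Finset.card_map, Finset.card_univ, Fintype.card_fin]
  -- rows beyond γ are zero
  have hEzero : ∀ i : Fin n, ¬ ((i : ℕ) < γ) → E (τ i) = 0 := by
    intro i hi
    rw [hE i, if_neg (by tauto)]
  have part1 : (univ.filter fun i : Fin n => E i ≠ 0).card ≤ γ := by
    have hsub : (univ.filter fun i : Fin n => E i ≠ 0) ⊆
        Finset.image τ (univ.filter fun i : Fin n => (i : ℕ) < γ) := by
      intro i hi
      rw [Finset.mem_filter] at hi
      rw [Finset.mem_image]
      refine ⟨τ.symm i, ?_, by simp⟩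
      rw [Finset.mem_filter]
      refine ⟨mem_univ _, ?_⟩
      by_contra hc
      exact hi.2 (by simpa using hEzero (τ.symm i) hc)
    calc (univ.filter fun i : Fin n => E i ≠ 0).card
        ≤ (Finset.image τ (univ.filter fun i : Fin n => (i : ℕ) < γ)).card :=
          Finset.card_le_card hsub
      _ ≤ (univ.filter fun i : Fin n => (i : ℕ) < γ).card := Finset.card_image_le
      _ = γ := hcardγ
  refine ⟨part1, ?_⟩
  intro F hF
  -- rewrite objectives as sums over permuted rows
  have hobj : ∀ M : Matrix (Fin n) (Fin r) ℝ,
      (∑ i, Real.sqrt (∑ j, (M i j) ^ 2)) + ρ / 2 * (∑ i, ∑ j, (M i j - Y i j) ^ 2)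
      = ∑ i, (Real.sqrt (∑ j, (M (τ i) j) ^ 2) + ρ / 2 * ∑ j, (M (τ i) j - Y (τ i) j) ^ 2) := by
    intro M
    rw [Finset.mul_sum, ← Finset.sum_add_distrib]
    exact (Equiv.sum_comp τ (fun i => Real.sqrt (∑ j, (M i j) ^ 2)
      + ρ / 2 * ∑ j, (M i j - Y i j) ^ 2)).symm
  -- per-row value for E
  have hErow : ∀ i : Fin n,
      Real.sqrt (∑ j, (E (τ i) j) ^ 2) + ρ / 2 * ∑ j, (E (τ i) j - Y (τ i) j) ^ 2
      = ρ / 2 * s i ^ 2 - (if (i : ℕ) < γ then gfun ρ (s i) else 0) := by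
    intro i
    by_cases hiγ : (i : ℕ) < γ
    · by_cases hbig : 1 / ρ < s i
      · have hrow : E (τ i) = fun j => ((Real.sqrt (∑ j', (Y (τ i) j') ^ 2) - 1 / ρ) /
            Real.sqrt (∑ j', (Y (τ i) j') ^ 2)) * Y (τ i) j := by
          rw [hE i, if_pos ⟨hbig, hiγ⟩]
        simp only [hrow]
        rw [row_shrink_val hρ (Y (τ i)) hbig]
        rw [if_pos hiγ]
        unfold gfun
        rw [if_pos hbig]
        ring
      · have hrow : E (τ i) = 0 := by rw [hE i, if_neg (by tauto)]
        simp only [hrow, Pi.zero_apply]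
        rw [if_pos hiγ]
        unfold gfun
        rw [if_neg hbig]
        simp [hs2 i]
    · have hrow : E (τ i) = 0 := hEzero i hiγ
      simp only [hrow, Pi.zero_apply]
      rw [if_neg hiγ]
      simp [hs2 i]
  -- per-row lower bound for F
  have hFrow : ∀ i : Fin n,
      ρ / 2 * s i ^ 2 - (if F (τ i) ≠ 0 then gfun ρ (s i) else 0)
      ≤ Real.sqrt (∑ j, (F (τ i) j) ^ 2) + ρ / 2 * ∑ j, (F (τ i) j - Y (τ i) j) ^ 2 := by
    intro i
    by_cases hF0 : F (τ i) = 0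
    · simp only [hF0, Pi.zero_apply, if_neg (by simp : ¬ ((0 : Fin r → ℝ) ≠ 0))]
      simp [hs2 i]
    · rw [if_pos hF0]
      refine le_trans (le_of_eq ?_) (row_lb hρ (Y (τ i)) (F (τ i)))
      unfold gfun
      split_ifs with h
      · ring
      · ring
  -- the two filtered index sets
  set S : Finset (Fin n) := univ.filter (fun i : Fin n => F (τ i) ≠ 0) with hSdef
  have hScard : S.card ≤ γ := by
    have himg : Finset.image τ S = univ.filter fun i : Fin n => F i ≠ 0 := by
      ext x
      simp only [Finset.mem_image, hSdef, Finset.mem_filter, mem_univ, true_and]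
      constructor
      · rintro ⟨a, ha, rfl⟩; exact ha
      · intro hx; exact ⟨τ.symm x, by simpa using hx, by simp⟩
    calc S.card = (Finset.image τ S).card :=
          (Finset.card_image_of_injective S τ.injective).symm
      _ ≤ γ := himg ▸ hF
  -- core combinatorial inequality
  have hcore : ∑ i ∈ S, gfun ρ (s i) ≤
      ∑ i ∈ univ.filter (fun i : Fin n => (i : ℕ) < γ), gfun ρ (s i) := by
    set k := S.card with hk
    have hkn : k ≤ n := hScard.trans hγ
    set e := S.orderEmbOfFin (rfl : S.card = k) with hedef
    have hrange : S = Finset.map e.toEmbedding univ := by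
      have hr := Finset.range_orderEmbOfFin S (rfl : S.card = k)
      ext x
      simp only [Finset.mem_map, mem_univ, true_and]
      constructor
      · intro hx
        have : x ∈ Set.range ⇑e := hr ▸ (by simpa using hx)
        obtain ⟨a, ha⟩ := this
        exact ⟨a, ha⟩
      · rintro ⟨a, rfl⟩
        have : (e.toEmbedding a : Fin n) ∈ Set.range ⇑e := ⟨a, rfl⟩
        rw [hr] at this
        simpa using this
    calc ∑ i ∈ S, gfun ρ (s i) = ∑ i : Fin k, gfun ρ (s (e i)) := by
          conv_lhs => rw [hrange]
          rw [Finset.sum_map]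
          rfl
      _ ≤ ∑ i : Fin k, gfun ρ (s (Fin.castLE hkn i)) := by
          refine Finset.sum_le_sum fun i _ => ?_
          refine gfun_mono hρ (hs0 _) ?_
          refine hτ _ _ ?_
          have := strictMono_fin_le e.strictMono i
          exact Fin.le_def.mpr (by simpa using this)
      _ = ∑ i ∈ univ.filter (fun i : Fin n => (i : ℕ) < k), gfun ρ (s i) := by
          rw [filter_lt_eq_map hkn, Finset.sum_map]; rfl
      _ ≤ ∑ i ∈ univ.filter (fun i : Fin n => (i : ℕ) < γ), gfun ρ (s i) := by
          refine Finset.sum_le_sum_of_subset_of_nonneg ?_ (fun i _ _ => gfun_nonneg hρ _)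
          intro x hx
          rw [Finset.mem_filter] at hx ⊢
          exact ⟨hx.1, lt_of_lt_of_le hx.2 hScard⟩
  -- assemble
  rw [hobj E, hobj F]
  have hEsum : ∑ i, (Real.sqrt (∑ j, (E (τ i) j) ^ 2) + ρ / 2 * ∑ j, (E (τ i) j - Y (τ i) j) ^ 2)
      = (∑ i, ρ / 2 * s i ^ 2) - ∑ i ∈ univ.filter (fun i : Fin n => (i : ℕ) < γ), gfun ρ (s i) := by
    rw [Finset.sum_congr rfl (fun i _ => hErow i), Finset.sum_sub_distrib,
      ← Finset.sum_filter]
  have hFsum : (∑ i, ρ / 2 * s i ^ 2) - ∑ i ∈ S, gfun ρ (s i)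
      ≤ ∑ i, (Real.sqrt (∑ j, (F (τ i) j) ^ 2) + ρ / 2 * ∑ j, (F (τ i) j - Y (τ i) j) ^ 2) := by
    calc (∑ i, ρ / 2 * s i ^ 2) - ∑ i ∈ S, gfun ρ (s i)
        = ∑ i, (ρ / 2 * s i ^ 2 - (if F (τ i) ≠ 0 then gfun ρ (s i) else 0)) := by
          rw [Finset.sum_sub_distrib, ← Finset.sum_filter]
      _ ≤ _ := Finset.sum_le_sum fun i _ => hFrow i
  rw [hEsum]
  refine le_trans ?_ hFsum
  linarith [hcore]
end

section
/- Let r ≥ 1 and δ > 0, and let M be the r×r matrix with entries M_{ij} = 1 if i ≤ j and M_{ij} = 1 + (i−j)δ if i > j (a lower-triangular-shifted Toeplitz matrix whose upper triangle including the diagonal is all ones). Then det(M) = (−δ)^{r−1}; in particular M is nonsingular. -/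
open Matrix

/-- Determinant of the Toeplitz-like matrix with ones on and above the diagonal and
entries `1 + (i−j)δ` below the diagonal: `det M = (−δ)^(r−1)`; in particular `M`
is nonsingular. -/
theorem toeplitz_det (r : ℕ) (hr : 1 ≤ r) (δ : ℝ) (hδ : 0 < δ)
    (M : Matrix (Fin r) (Fin r) ℝ)
    (hM : ∀ i j : Fin r, M i j =
      if (i : ℕ) ≤ (j : ℕ) then 1 else 1 + (((i : ℕ) - (j : ℕ) : ℕ) : ℝ) * δ) :
    M.det = (-δ) ^ (r - 1) ∧ M.det ≠ 0 := by
  haveI : NeZero r := ⟨by omega⟩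
  -- F : column operation matrix (upper bidiagonal, det 1)
  set F : Matrix (Fin r) (Fin r) ℝ :=
    fun j k => if j = k then 1 else if (j : ℕ) + 1 = (k : ℕ) then -1 else 0 with hF
  have hFsplit : ∀ j k : Fin r, F j k =
      (if j = k then (1:ℝ) else 0) + (if (j : ℕ) + 1 = (k : ℕ) then -1 else 0) := by
    intro j k
    simp only [hF]
    split_ifs with h1 h2 <;> first | (subst h1; omega) | ring
  have hMF : ∀ i k : Fin r, (M * F) i k =
      M i k - (if (k : ℕ) = 0 then 0
        else M i ⟨(k : ℕ) - 1, lt_of_le_of_lt (Nat.sub_le _ _) k.isLt⟩) := by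
    intro i k
    rw [Matrix.mul_apply]
    calc ∑ j, M i j * F j k
        = (∑ j, M i j * (if j = k then (1:ℝ) else 0)) +
          (∑ j, M i j * (if (j : ℕ) + 1 = (k : ℕ) then (-1:ℝ) else 0)) := by
          rw [← Finset.sum_add_distrib]
          exact Finset.sum_congr rfl fun j _ => by rw [hFsplit, mul_add]
      _ = M i k - (if (k : ℕ) = 0 then 0
          else M i ⟨(k : ℕ) - 1, lt_of_le_of_lt (Nat.sub_le _ _) k.isLt⟩) := by
          congr 1
          · simp [Finset.sum_ite_eq']
          · rcases Nat.eq_zero_or_pos (k : ℕ) with hk | hk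
            · rw [if_pos hk, neg_zero]
              apply Finset.sum_eq_zero
              intro j _
              rw [if_neg (by omega), mul_zero]
            · rw [if_neg (by omega)]
              set k' : Fin r := ⟨(k : ℕ) - 1, lt_of_le_of_lt (Nat.sub_le _ _) k.isLt⟩
              have hcond : ∀ j : Fin r, ((j : ℕ) + 1 = (k : ℕ)) ↔ j = k' := by
                intro j
                rw [Fin.ext_iff]
                show _ ↔ (j : ℕ) = (k : ℕ) - 1
                omega
              calc (∑ j, M i j * (if (j : ℕ) + 1 = (k : ℕ) then (-1:ℝ) else 0))
                  = ∑ j, (if j = k' then (M i j * -1) else 0) := by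
                    refine Finset.sum_congr rfl fun j _ => ?_
                    simp only [hcond]
                    split_ifs <;> simp
                _ = -M i k' := by simp [Finset.sum_ite_eq']
  -- M * F is lower triangular
  have htri : ∀ i k : Fin r, i < k → (M * F) i k = 0 := by
    intro i k hik
    have hik' : (i : ℕ) < (k : ℕ) := hik
    rw [hMF, if_neg (by omega), hM, hM]
    rw [if_pos (by omega), if_pos (by simp; omega)]
    ring
  have hdetF : F.det = 1 := by
    rw [Matrix.det_of_upperTriangular]
    · simp [hF]
    · intro i j hji
      have : (j : ℕ) < (i : ℕ) := hji
      simp only [hF]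
      rw [if_neg (by exact fun h => by subst h; omega), if_neg (by omega)]
  have hdiag : ∀ k : Fin r, (M * F) k k = if (k : ℕ) = 0 then 1 else -δ := by
    intro k
    rw [hMF]
    rcases Nat.eq_zero_or_pos (k : ℕ) with hk | hk
    · rw [if_pos hk, if_pos hk, hM, if_pos le_rfl]; ring
    · rw [if_neg (by omega), if_neg (by omega), hM, hM]
      rw [if_pos le_rfl, if_neg (by show ¬ (k:ℕ) ≤ (k:ℕ) - 1; omega)]
      have : ((k : ℕ) - ((k : ℕ) - 1) : ℕ) = 1 := by omega
      rw [this]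
      push_cast
      ring
  have hdetN : (M * F).det = (-δ) ^ (r - 1) := by
    rw [Matrix.det_of_lowerTriangular (M * F) (fun i j hij => htri i j hij)]
    calc ∏ k : Fin r, (M * F) k k
        = ∏ k : Fin r, (if k = (0 : Fin r) then (1:ℝ) else -δ) := by
          refine Finset.prod_congr rfl fun k _ => ?_
          rw [hdiag k]
          congr 1
          simp only [Fin.ext_iff, Fin.val_zero]
      _ = (-δ) ^ (r - 1) := by
          rw [← Finset.mul_prod_erase Finset.univ _ (Finset.mem_univ (0 : Fin r))]
          rw [if_pos rfl, one_mul]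
          rw [Finset.prod_ite_of_false (fun k hk => (Finset.mem_erase.mp hk).1)]
          rw [Finset.prod_const, Finset.card_erase_of_mem (Finset.mem_univ _),
            Finset.card_univ, Fintype.card_fin]
  have hdetM : M.det = (-δ) ^ (r - 1) := by
    have := Matrix.det_mul M F
    rw [hdetF, mul_one] at this
    rw [← this, hdetN]
  exact ⟨hdetM, hdetM ▸ pow_ne_zero _ (neg_ne_zero.mpr hδ.ne')⟩
end

section
/- Let A ∈ ℝ^{m×n} with rank(A) = r, let T be a set of r column indices with Â := A[·,T] of rank r, and S a set of r row indices such that Ã := A[S,T] is nonsingular. Suppose Ã is a (1+ε)-local maximizer of the absolute determinant among r×r nonsingular submatrices of A[S,·] (i.e., swapping any one column of T for a column outside T increases |det| by a factor of at most 1+ε). Then the column-block matrix H constructed from Â (rows T equal to Â†, other rows zero) is an ah-symmetric reflexive generalized inverse of A satisfying ‖H‖_{2,1} ≤ r(1+ε)·‖H_opt‖_{2,1}, where H_opt minimizes ‖·‖_{2,1} over all matrices satisfying AHA = A. -/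
open Matrix Finset

-- auxiliary lemma: Euclidean triangle inequality in sqrt-sum-of-squares form
lemma sqrt_sum_sq_combo {m n : ℕ} (w : Fin n → ℝ) (G : Matrix (Fin n) (Fin m) ℝ) :
    Real.sqrt (∑ j, (∑ i, w i * G i j) ^ 2) ≤ ∑ i, |w i| * Real.sqrt (∑ j, (G i j) ^ 2) := by
  classical
  let g : Fin n → EuclideanSpace ℝ (Fin m) := fun i => WithLp.toLp 2 (fun j => G i j)
  have hnorm : ∀ i, ‖g i‖ = Real.sqrt (∑ j, (G i j) ^ 2) := by
    intro i
    rw [EuclideanSpace.norm_eq]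
    congr 1
    refine Finset.sum_congr rfl fun j _ => ?_
    rw [Real.norm_eq_abs, sq_abs]
  have hsum : ((∑ i, w i • g i : EuclideanSpace ℝ (Fin m))) = fun j => ∑ i, w i * G i j := by
    funext j
    rw [WithLp.ofLp_sum, Finset.sum_apply]
    simp [g, PiLp.smul_apply]
  have h1 : Real.sqrt (∑ j, (∑ i, w i * G i j) ^ 2)
      = ‖(∑ i, w i • g i : EuclideanSpace ℝ (Fin m))‖ := by
    rw [EuclideanSpace.norm_eq]
    congr 1
    refine Finset.sum_congr rfl fun j _ => ?_
    rw [Real.norm_eq_abs, sq_abs]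
    rw [hsum]
  rw [h1]
  calc ‖(∑ i, w i • g i : EuclideanSpace ℝ (Fin m))‖ ≤ ∑ i, ‖w i • g i‖ := norm_sum_le _ _
    _ = ∑ i, |w i| * Real.sqrt (∑ j, (G i j) ^ 2) := by
        refine Finset.sum_congr rfl fun i _ => ?_
        rw [norm_smul, Real.norm_eq_abs, hnorm]

-- auxiliary: min-norm property
lemma row_min_norm {r m : ℕ} (Ahat : Matrix (Fin m) (Fin r) ℝ) (u v : Fin m → ℝ) (c : Fin r → ℝ)
    (hu : ∀ j, u j = ∑ l, c l * Ahat j l)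
    (heq : ∀ l, ∑ j, v j * Ahat j l = ∑ j, u j * Ahat j l) :
    ∑ j, (u j) ^ 2 ≤ ∑ j, (v j) ^ 2 := by
  have orth : ∑ j, (v j - u j) * u j = 0 := by
    calc ∑ j, (v j - u j) * u j = ∑ j, ∑ l, c l * ((v j - u j) * Ahat j l) := by
          refine Finset.sum_congr rfl fun j _ => ?_
          rw [hu j, Finset.mul_sum]
          refine Finset.sum_congr rfl fun l _ => by ring
      _ = ∑ l, c l * (∑ j, (v j - u j) * Ahat j l) := by
          rw [Finset.sum_comm]
          refine Finset.sum_congr rfl fun l _ => by rw [Finset.mul_sum]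
      _ = 0 := by
          refine Finset.sum_eq_zero fun l _ => ?_
          have : ∑ j, (v j - u j) * Ahat j l = 0 := by
            have h := heq l
            simp only [sub_mul]
            rw [Finset.sum_sub_distrib, h, sub_self]
          rw [this, mul_zero]
  have hexp : ∑ j, (v j) ^ 2 = ∑ j, (u j) ^ 2 + 2 * (∑ j, (v j - u j) * u j) + ∑ j, (v j - u j) ^ 2 := by
    rw [Finset.mul_sum, ← Finset.sum_add_distrib, ← Finset.sum_add_distrib]
    refine Finset.sum_congr rfl fun j _ => by ring
  have hnn : (0:ℝ) ≤ ∑ j, (v j - u j) ^ 2 := Finset.sum_nonneg fun j _ => sq_nonneg _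
  rw [hexp, orth]
  linarith


/-- 2,1-norm approximation guarantee of the determinant-based local search:
if `Ã := A[S,T]` is a `(1+ε)`-local maximizer of the absolute determinant among
`r×r` nonsingular submatrices of `A[S,·]`, then the column-block matrix `H`
(rows `T` equal to `Â† = (ÂᵀÂ)⁻¹Âᵀ` for `Â := A[·,T]`, other rows zero) is an
ah-symmetric reflexive generalized inverse of `A` with
`‖H‖_{2,1} ≤ r(1+ε)·‖G‖_{2,1}` for every generalized inverse `G` of `A`. -/
theorem local_search_21_approx (m n r : ℕ) (A : Matrix (Fin m) (Fin n) ℝ)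
    (hrA : A.rank = r) (ε : ℝ) (hε : 0 ≤ ε)
    (S : Fin r → Fin m) (hS : Function.Injective S)
    (hSrank : (A.submatrix S id).rank = r)
    (T : Fin r → Fin n) (hT : Function.Injective T)
    (hdet : (A.submatrix S T).det ≠ 0)
    (hlocal : ∀ (k : Fin r) (j : Fin n), (∀ k', T k' ≠ j) →
      |((A.submatrix S T).updateCol k (fun i => A (S i) j)).det| ≤
        (1 + ε) * |(A.submatrix S T).det|)
    (H : Matrix (Fin n) (Fin m) ℝ)
    (hHrows : ∀ k, H (T k) =
      (((A.submatrix id T)ᵀ * A.submatrix id T)⁻¹ * (A.submatrix id T)ᵀ) k)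
    (hHzero : ∀ j, (∀ k, T k ≠ j) → H j = 0) :
    A * H * A = A ∧ H * A * H = H ∧ (A * H)ᵀ = A * H ∧
    ∀ G : Matrix (Fin n) (Fin m) ℝ, A * G * A = A →
      (∑ i, Real.sqrt (∑ j, (H i j) ^ 2)) ≤
        r * (1 + ε) * ∑ i, Real.sqrt (∑ j, (G i j) ^ 2) := by
  classical
  set Ahat : Matrix (Fin m) (Fin r) ℝ := A.submatrix id T with hAhatdef
  set N : Matrix (Fin r) (Fin r) ℝ := Ahatᵀ * Ahat with hNdef
  set Adag : Matrix (Fin r) (Fin m) ℝ := N⁻¹ * Ahatᵀ with hAdagdef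
  set Atil : Matrix (Fin r) (Fin r) ℝ := A.submatrix S T with hAtildef
  -- Atil is invertible
  have hdu : IsUnit Atil.det := isUnit_iff_ne_zero.2 hdet
  have hAtilu : IsUnit Atil := (Matrix.isUnit_iff_isUnit_det _).2 hdu
  -- Ahat has injective mulVec
  have hAhatinj : ∀ x : Fin r → ℝ, Ahat *ᵥ x = 0 → x = 0 := by
    intro x hx
    have h1 : Atil *ᵥ x = 0 := by
      funext i
      have := congrFun hx (S i)
      simpa [Matrix.mulVec, dotProduct, hAhatdef, hAtildef] using this
    have hinj : Function.Injective Atil.mulVec := Matrix.mulVec_injective_iff_isUnit.2 hAtilu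
    have := hinj (a₁ := x) (a₂ := 0) (by rw [h1, Matrix.mulVec_zero])
    exact this
  -- N is invertible
  have hNu : IsUnit N := by
    rw [← Matrix.mulVec_injective_iff_isUnit]
    intro x y hxy
    have hd : N *ᵥ (x - y) = 0 := by
      rw [Matrix.mulVec_sub, hxy, sub_self]
    have hq : (Ahat *ᵥ (x - y)) ⬝ᵥ (Ahat *ᵥ (x - y)) = 0 := by
      have h1 : N *ᵥ (x - y) = Ahatᵀ *ᵥ (Ahat *ᵥ (x - y)) := by
        rw [hNdef, ← Matrix.mulVec_mulVec]
      have h2 : (x - y) ⬝ᵥ (N *ᵥ (x - y)) = (Ahat *ᵥ (x - y)) ⬝ᵥ (Ahat *ᵥ (x - y)) := by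
        rw [h1, Matrix.dotProduct_mulVec, Matrix.vecMul_transpose]
      rw [← h2, hd, dotProduct_zero]
    have h3 : Ahat *ᵥ (x - y) = 0 := by
      have := dotProduct_self_eq_zero.mp hq
      exact this
    have := hAhatinj _ h3
    exact sub_eq_zero.mp this
  have hNdu : IsUnit N.det := (Matrix.isUnit_iff_isUnit_det _).1 hNu
  have hNi : N⁻¹ * N = 1 := Matrix.nonsing_inv_mul N hNdu
  -- Adag * Ahat = 1
  have hDA : Adag * Ahat = 1 := by
    rw [hAdagdef, Matrix.mul_assoc, ← hNdef]
    exact hNi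
  -- the selection matrix P
  set P : Matrix (Fin n) (Fin r) ℝ := fun j k => if T k = j then 1 else 0 with hPdef
  have hAP : A * P = Ahat := by
    ext i k
    rw [Matrix.mul_apply]
    simp only [Matrix.mul_apply, hPdef, mul_ite, mul_one, mul_zero, hAhatdef,
      Matrix.submatrix_apply, id_eq]
    rw [Finset.sum_ite_eq Finset.univ (T k) (fun j => A i j)]
    simp
  have hHP : H = P * Adag := by
    ext j i
    by_cases hj : ∃ k, T k = j
    · obtain ⟨k, hk⟩ := hj
      subst hk
      have h1 : H (T k) i = Adag k i := congrFun (hHrows k) i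
      have h2 : (P * Adag) (T k) i = Adag k i := by
        rw [Matrix.mul_apply]
        simp only [Matrix.mul_apply, hPdef, ite_mul, one_mul, zero_mul]
        simp_rw [hT.eq_iff]
        rw [Finset.sum_ite_eq' Finset.univ k (fun x => Adag x i)]
        simp
      rw [h1, h2]
    · push_neg at hj
      have h1 : H j i = 0 := by rw [hHzero j hj]; rfl
      have h2 : (P * Adag) j i = 0 := by
        rw [Matrix.mul_apply]
        apply Finset.sum_eq_zero
        intro k _
        simp [hPdef, hj k]
      rw [h1, h2]
  -- projection property : Ahat * Adag * A = A
  have hQA : Ahat * Adag * A = A := by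
    have hle : LinearMap.range Ahat.mulVecLin ≤ LinearMap.range A.mulVecLin := by
      rw [← hAP, Matrix.mulVecLin_mul]
      exact LinearMap.range_comp_le_range _ _
    have hr1 : r ≤ Ahat.rank := by
      have h := Matrix.rank_mul_le_right Adag Ahat
      rw [hDA] at h
      simpa using h
    have heq : LinearMap.range Ahat.mulVecLin = LinearMap.range A.mulVecLin := by
      apply Submodule.eq_of_le_of_finrank_le hle
      have h2 : Module.finrank ℝ (LinearMap.range A.mulVecLin) = A.rank := rfl
      have h3 : Module.finrank ℝ (LinearMap.range Ahat.mulVecLin) = Ahat.rank := rfl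
      rw [h2, h3, hrA]
      exact hr1
    ext i j
    have hcol : (fun l => A l j) ∈ LinearMap.range Ahat.mulVecLin := by
      rw [heq]
      refine ⟨Pi.single j 1, ?_⟩
      show A *ᵥ Pi.single j 1 = fun l => A l j
      funext l
      simp [Matrix.mulVec_single]
    obtain ⟨x, hx⟩ := hcol
    have hx' : Ahat *ᵥ x = fun l => A l j := hx
    have h4 : (Ahat * Adag * A) i j = ((Ahat * Adag) *ᵥ (fun l => A l j)) i := by
      simp [Matrix.mul_apply, Matrix.mulVec, dotProduct]
    rw [h4, ← hx', Matrix.mulVec_mulVec, Matrix.mul_assoc, hDA, Matrix.mul_one]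
    rw [hx']
  have hAH : A * H = Ahat * Adag := by rw [hHP, ← Matrix.mul_assoc, hAP]
  refine ⟨?_, ?_, ?_, ?_⟩
  · rw [hAH]; exact hQA
  · rw [Matrix.mul_assoc, hAH, hHP, Matrix.mul_assoc, ← Matrix.mul_assoc Adag, hDA,
      Matrix.one_mul]
  · have hNs : Nᵀ = N := by rw [hNdef, Matrix.transpose_mul, Matrix.transpose_transpose]
    rw [hAH, hAdagdef, ← Matrix.mul_assoc, Matrix.transpose_mul, Matrix.transpose_mul,
      Matrix.transpose_transpose, Matrix.transpose_nonsing_inv, hNs, Matrix.mul_assoc]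
  · intro G hG
    set W : Matrix (Fin r) (Fin n) ℝ := Adag * A with hWdef
    have hAhatW : Ahat * W = A := by rw [hWdef, ← Matrix.mul_assoc]; exact hQA
    have hAtilW : Atil * W = A.submatrix S id := by
      ext i j
      have h := congrFun (congrFun hAhatW (S i)) j
      simp only [Matrix.mul_apply, hAtildef, hAhatdef, Matrix.submatrix_apply, id_eq] at h ⊢
      exact h
    have hWinv : W = Atil⁻¹ * A.submatrix S id := by
      rw [← hAtilW, ← Matrix.mul_assoc, Matrix.nonsing_inv_mul _ hdu, Matrix.one_mul]
    have habsne : |Atil.det| ≠ 0 := abs_ne_zero.2 hdet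
    have hWbound : ∀ k j, |W k j| ≤ 1 + ε := by
      intro k j
      have hWkj : W k j
          = Ring.inverse Atil.det * (Atil.updateCol k (fun i => A (S i) j)).det := by
        rw [hWinv, Matrix.mul_apply]
        have hmv : ∑ i, Atil⁻¹ k i * (A.submatrix S id) i j
            = (Atil⁻¹ *ᵥ (fun i => A (S i) j)) k := by
          simp [Matrix.mulVec, dotProduct, Matrix.submatrix_apply]
        rw [hmv, Matrix.inv_def, Matrix.smul_mulVec, ← Matrix.cramer_eq_adjugate_mulVec]
        simp [Matrix.cramer_apply]
      have habs : |(Atil.updateCol k (fun i => A (S i) j)).det| ≤ (1 + ε) * |Atil.det| := by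
        by_cases hj : ∃ k', T k' = j
        · obtain ⟨k', hk'⟩ := hj
          subst hk'
          by_cases hkk : k' = k
          · subst hkk
            have hcol : (fun i => A (S i) (T k')) = fun i => Atil i k' := by
              funext i; simp [hAtildef]
            rw [hcol, Matrix.updateCol_eq_self]
            nlinarith [abs_nonneg Atil.det]
          · have hzero : (Atil.updateCol k (fun i => A (S i) (T k'))).det = 0 := by
              apply Matrix.det_zero_of_column_eq (show k ≠ k' from fun h => hkk h.symm)
              intro l
              simp [Matrix.updateCol_apply, hkk, hAtildef]
            rw [hzero]
            simp only [abs_zero]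
            positivity
        · push_neg at hj
          exact hlocal k j hj
      calc |W k j| = |Atil.det|⁻¹ * |(Atil.updateCol k (fun i => A (S i) j)).det| := by
            rw [hWkj, abs_mul, Ring.inverse_eq_inv', abs_inv]
        _ ≤ |Atil.det|⁻¹ * ((1 + ε) * |Atil.det|) := by
            apply mul_le_mul_of_nonneg_left habs
            positivity
        _ = 1 + ε := by field_simp
    have hMA : (W * G) * Ahat = 1 := by
      have h2 : A * G * Ahat = Ahat := by
        rw [← hAP, ← Matrix.mul_assoc, hG]
      rw [hWdef, Matrix.mul_assoc Adag A G, Matrix.mul_assoc Adag (A * G) Ahat, h2, hDA]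
    have hstep : ∀ k, Real.sqrt (∑ j, (Adag k j) ^ 2)
        ≤ (1 + ε) * ∑ i, Real.sqrt (∑ j, (G i j) ^ 2) := by
      intro k
      have hmin : ∑ j, (Adag k j) ^ 2 ≤ ∑ j, ((W * G) k j) ^ 2 := by
        apply row_min_norm Ahat (Adag k) ((W * G) k) (N⁻¹ k)
        · intro j
          simp [hAdagdef, Matrix.mul_apply, Matrix.transpose_apply]
        · intro l
          have h1 := congrFun (congrFun hMA k) l
          have h2 := congrFun (congrFun hDA k) l
          simp only [Matrix.mul_apply] at h1 h2 ⊢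
          rw [h1, h2]
      calc Real.sqrt (∑ j, (Adag k j) ^ 2) ≤ Real.sqrt (∑ j, ((W * G) k j) ^ 2) :=
            Real.sqrt_le_sqrt hmin
        _ = Real.sqrt (∑ j, (∑ i, W k i * G i j) ^ 2) := rfl
        _ ≤ ∑ i, |W k i| * Real.sqrt (∑ j, (G i j) ^ 2) := sqrt_sum_sq_combo (W k) G
        _ ≤ ∑ i, (1 + ε) * Real.sqrt (∑ j, (G i j) ^ 2) := by
            refine Finset.sum_le_sum fun i _ => ?_
            exact mul_le_mul_of_nonneg_right (hWbound k i) (Real.sqrt_nonneg _)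
        _ = (1 + ε) * ∑ i, Real.sqrt (∑ j, (G i j) ^ 2) := by rw [← Finset.mul_sum]
    have hLHS : (∑ i, Real.sqrt (∑ j, (H i j) ^ 2))
        = ∑ k, Real.sqrt (∑ j, (Adag k j) ^ 2) := by
      have h2 : ∑ i ∈ Finset.univ.image T, Real.sqrt (∑ j, (H i j) ^ 2)
          = ∑ i, Real.sqrt (∑ j, (H i j) ^ 2) := by
        apply Finset.sum_subset (Finset.subset_univ _)
        intro i _ hi
        have hz : ∀ k, T k ≠ i := fun k hk =>
          hi (Finset.mem_image.mpr ⟨k, Finset.mem_univ k, hk⟩)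
        have : H i = 0 := hHzero i hz
        simp [this]
      rw [← h2, Finset.sum_image (fun x _ y _ h => hT h)]
      refine Finset.sum_congr rfl fun k _ => ?_
      congr 1
      exact Finset.sum_congr rfl fun j _ => by rw [congrFun (hHrows k) j]
    rw [hLHS]
    calc ∑ k, Real.sqrt (∑ j, (Adag k j) ^ 2)
        ≤ ∑ _k : Fin r, (1 + ε) * ∑ i, Real.sqrt (∑ j, (G i j) ^ 2) :=
          Finset.sum_le_sum fun k _ => hstep k
      _ = r * (1 + ε) * ∑ i, Real.sqrt (∑ j, (G i j) ^ 2) := by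
          rw [Finset.sum_const, Finset.card_univ, Fintype.card_fin, nsmul_eq_mul]
          ring
end
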